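/- Let E = ℝ² be equipped with the supremum norm ‖x‖ = max{|x⁽¹⁾|, |x⁽²⁾|}, and let f : ℝ² → ℝ be defined by f(x) = (x⁽¹⁾)² − (x⁽²⁾)². Then for x = (1,1) and y = (0,0) one has ‖x − y‖ = 1 and ‖f'(x) − f'(y)‖* ≥ 4, where ‖·‖* is the dual norm of the supremum norm. Consequently, the Lipschitz constant of the gradient of f satisfies M_f ≥ 4, while f is 1-approximable with parameter 2, so the best 1-approximation parameter of f equals half the Lipschitz constant of its gradient. -/

import Mathlib

noncomputable def P (i : Fin 2) : (Fin 2 → ℝ) →L[ℝ] ℝ := ContinuousLinearMap.proj i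

lemma hasFDeriv_sq (x : Fin 2 → ℝ) (i : Fin 2) :
    HasFDerivAt (fun x : Fin 2 → ℝ => x i ^ 2) ((2 * x i) • P i) x := by
  have h := (ContinuousLinearMap.proj (R := ℝ) (φ := fun _ : Fin 2 => ℝ) i).hasFDerivAt (x := x)
  have := h.mul h
  simpa [P, sq, two_mul, add_smul, Pi.mul_def] using this

lemma hasFDeriv_f (x : Fin 2 → ℝ) :
    HasFDerivAt (fun x : Fin 2 → ℝ => x 0 ^ 2 - x 1 ^ 2)
      ((2 * x 0) • P 0 - (2 * x 1) • P 1) x :=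
  (hasFDeriv_sq x 0).sub (hasFDeriv_sq x 1)

lemma fderiv_f (x : Fin 2 → ℝ) :
    fderiv ℝ (fun x : Fin 2 → ℝ => x 0 ^ 2 - x 1 ^ 2) x
      = (2 * x 0) • P 0 - (2 * x 1) • P 1 := (hasFDeriv_f x).fderiv

lemma abs_le_norm (v : Fin 2 → ℝ) (i : Fin 2) : |v i| ≤ ‖v‖ := by
  simpa [Real.norm_eq_abs] using norm_le_pi_norm v i

lemma pi_norm_eq_one (v : Fin 2 → ℝ) (h0 : |v 0| = 1) (h1 : |v 1| ≤ 1) : ‖v‖ = 1 := by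
  apply le_antisymm
  · refine (pi_norm_le_iff_of_nonneg zero_le_one).mpr fun i => ?_
    fin_cases i <;> simp [Real.norm_eq_abs, h0.le, h1]
  · calc (1:ℝ) = |v 0| := h0.symm
      _ ≤ ‖v‖ := abs_le_norm v 0

lemma opnorm_le (a b : ℝ) : ‖a • P 0 - b • P 1‖ ≤ |a| + |b| := by
  refine ContinuousLinearMap.opNorm_le_bound _ (by positivity) fun h => ?_
  have h0 := abs_le_norm h 0
  have h1 := abs_le_norm h 1
  have key : |a * h 0 - b * h 1| ≤ |a| * |h 0| + |b| * |h 1| := by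
    rw [← abs_mul, ← abs_mul, sub_eq_add_neg]
    exact (abs_add_le _ _).trans (by rw [abs_neg])
  simp only [ContinuousLinearMap.sub_apply, ContinuousLinearMap.smul_apply, P,
    ContinuousLinearMap.proj_apply, smul_eq_mul, Real.norm_eq_abs]
  nlinarith [abs_nonneg a, abs_nonneg b, abs_nonneg (h 0), abs_nonneg (h 1)]

/-- On ℝ² with the supremum norm, for `f x = x₁² − x₂²`, taking x = (1,1) and y = (0,0)
one has ‖x − y‖ = 1 and ‖f'(x) − f'(y)‖* ≥ 4; consequently the Lipschitz constant M_f of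
the gradient satisfies M_f ≥ 4, f is 1-approximable with parameter 2, and the best
1-approximation parameter L_f equals half the Lipschitz constant M_f. -/
theorem sup_norm_example_gap
    (f : (Fin 2 → ℝ) → ℝ) (hf : f = fun x => x 0 ^ 2 - x 1 ^ 2) :
    ‖(![1, 1] : Fin 2 → ℝ) - ![0, 0]‖ = 1 ∧
    ‖fderiv ℝ f ![1, 1] - fderiv ℝ f ![0, 0]‖ ≥ 4 ∧
    (4 ≤ sInf {M : ℝ | 0 ≤ M ∧
        ∀ x y : Fin 2 → ℝ, ‖fderiv ℝ f x - fderiv ℝ f y‖ ≤ M * ‖x - y‖}) ∧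
    (∀ x y : Fin 2 → ℝ, |f y - f x - fderiv ℝ f x (y - x)| ≤ 2 / 2 * ‖y - x‖ ^ 2) ∧
    sInf {L : ℝ | 0 ≤ L ∧
        ∀ x y : Fin 2 → ℝ, |f y - f x - fderiv ℝ f x (y - x)| ≤ L / 2 * ‖y - x‖ ^ 2} =
      sInf {M : ℝ | 0 ≤ M ∧
        ∀ x y : Fin 2 → ℝ, ‖fderiv ℝ f x - fderiv ℝ f y‖ ≤ M * ‖x - y‖} / 2 := by
  subst hf
  -- norm of (1,1) - (0,0)
  have hsub : (![1, 1] : Fin 2 → ℝ) - ![0, 0] = ![1, 1] := by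
    ext i; fin_cases i <;> simp
  have hn1 : ‖(![1, 1] : Fin 2 → ℝ) - ![0, 0]‖ = 1 := by
    rw [hsub]; exact pi_norm_eq_one _ (by norm_num) (by norm_num)
  -- difference of derivatives, general formula
  have hdiff : ∀ x y : Fin 2 → ℝ,
      fderiv ℝ (fun x : Fin 2 → ℝ => x 0 ^ 2 - x 1 ^ 2) x
        - fderiv ℝ (fun x : Fin 2 → ℝ => x 0 ^ 2 - x 1 ^ 2) y
      = (2 * x 0 - 2 * y 0) • P 0 - (2 * x 1 - 2 * y 1) • P 1 := by
    intro x y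
    rw [fderiv_f, fderiv_f]
    ext h
    simp only [ContinuousLinearMap.sub_apply, ContinuousLinearMap.smul_apply, P,
      ContinuousLinearMap.proj_apply, smul_eq_mul]
    ring
  -- the lower bound 4 at the specific points
  have hD4 : (4:ℝ) ≤ ‖fderiv ℝ (fun x : Fin 2 → ℝ => x 0 ^ 2 - x 1 ^ 2) ![1, 1]
      - fderiv ℝ (fun x : Fin 2 → ℝ => x 0 ^ 2 - x 1 ^ 2) ![0, 0]‖ := by
    set D := fderiv ℝ (fun x : Fin 2 → ℝ => x 0 ^ 2 - x 1 ^ 2) ![1, 1]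
      - fderiv ℝ (fun x : Fin 2 → ℝ => x 0 ^ 2 - x 1 ^ 2) ![0, 0] with hDdef
    have hv : ‖(![1, -1] : Fin 2 → ℝ)‖ = 1 := pi_norm_eq_one _ (by norm_num) (by norm_num)
    have happ : D ![1, -1] = 4 := by
      rw [hDdef, hdiff]
      simp only [ContinuousLinearMap.sub_apply, ContinuousLinearMap.smul_apply, P,
        ContinuousLinearMap.proj_apply, smul_eq_mul]
      norm_num
    have := D.le_opNorm ![1, -1]
    rw [happ, hv, mul_one] at this
    simpa [Real.norm_eq_abs] using this
  -- Lipschitz bound with constant 4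
  have hlip : ∀ x y : Fin 2 → ℝ,
      ‖fderiv ℝ (fun x : Fin 2 → ℝ => x 0 ^ 2 - x 1 ^ 2) x
        - fderiv ℝ (fun x : Fin 2 → ℝ => x 0 ^ 2 - x 1 ^ 2) y‖ ≤ 4 * ‖x - y‖ := by
    intro x y
    rw [hdiff]
    refine (opnorm_le _ _).trans ?_
    have h0 : |x 0 - y 0| ≤ ‖x - y‖ := by simpa using abs_le_norm (x - y) 0
    have h1 : |x 1 - y 1| ≤ ‖x - y‖ := by simpa using abs_le_norm (x - y) 1
    have e0 : |2 * x 0 - 2 * y 0| = 2 * |x 0 - y 0| := by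
      rw [show 2 * x 0 - 2 * y 0 = 2 * (x 0 - y 0) by ring, abs_mul, abs_two]
    have e1 : |2 * x 1 - 2 * y 1| = 2 * |x 1 - y 1| := by
      rw [show 2 * x 1 - 2 * y 1 = 2 * (x 1 - y 1) by ring, abs_mul, abs_two]
    rw [e0, e1]; linarith
  -- approximation bound (quadratic remainder)
  have happrox : ∀ x y : Fin 2 → ℝ,
      |(fun x : Fin 2 → ℝ => x 0 ^ 2 - x 1 ^ 2) y - (fun x : Fin 2 → ℝ => x 0 ^ 2 - x 1 ^ 2) x
        - fderiv ℝ (fun x : Fin 2 → ℝ => x 0 ^ 2 - x 1 ^ 2) x (y - x)| ≤ ‖y - x‖ ^ 2 := by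
    intro x y
    rw [fderiv_f]
    simp only [ContinuousLinearMap.sub_apply, ContinuousLinearMap.smul_apply, P,
      ContinuousLinearMap.proj_apply, smul_eq_mul, Pi.sub_apply]
    have h0 : |y 0 - x 0| ≤ ‖y - x‖ := by simpa using abs_le_norm (y - x) 0
    have h1 : |y 1 - x 1| ≤ ‖y - x‖ := by simpa using abs_le_norm (y - x) 1
    have key : y 0 ^ 2 - y 1 ^ 2 - (x 0 ^ 2 - x 1 ^ 2) - (2 * x 0 * (y 0 - x 0) - 2 * x 1 * (y 1 - x 1))
        = (y 0 - x 0) ^ 2 - (y 1 - x 1) ^ 2 := by ring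
    rw [key]
    rw [abs_le]
    constructor <;> nlinarith [sq_abs (y 0 - x 0), sq_abs (y 1 - x 1),
      abs_nonneg (y 0 - x 0), abs_nonneg (y 1 - x 1), norm_nonneg (y - x)]
  refine ⟨hn1, ?_, ?_, ?_, ?_⟩
  · exact hD4
  · -- 4 ≤ sInf M-set
    refine le_csInf ⟨4, by norm_num, hlip⟩ fun M hM => ?_
    have := hM.2 ![1, 1] ![0, 0]
    rw [hn1, mul_one] at this
    linarith
  · intro x y
    rw [show (2:ℝ) / 2 = 1 by norm_num, one_mul]
    exact happrox x y
  · -- equality of infima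
    have hMset : sInf {M : ℝ | 0 ≤ M ∧
        ∀ x y : Fin 2 → ℝ, ‖fderiv ℝ (fun x : Fin 2 → ℝ => x 0 ^ 2 - x 1 ^ 2) x
          - fderiv ℝ (fun x : Fin 2 → ℝ => x 0 ^ 2 - x 1 ^ 2) y‖ ≤ M * ‖x - y‖} = 4 := by
      apply le_antisymm
      · exact csInf_le ⟨0, fun M hM => hM.1⟩ ⟨by norm_num, hlip⟩
      · refine le_csInf ⟨4, by norm_num, hlip⟩ fun M hM => ?_
        have := hM.2 ![1, 1] ![0, 0]
        rw [hn1, mul_one] at this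
        linarith
    have hLset : sInf {L : ℝ | 0 ≤ L ∧
        ∀ x y : Fin 2 → ℝ, |(fun x : Fin 2 → ℝ => x 0 ^ 2 - x 1 ^ 2) y
          - (fun x : Fin 2 → ℝ => x 0 ^ 2 - x 1 ^ 2) x
          - fderiv ℝ (fun x : Fin 2 → ℝ => x 0 ^ 2 - x 1 ^ 2) x (y - x)| ≤ L / 2 * ‖y - x‖ ^ 2} = 2 := by
      apply le_antisymm
      · refine csInf_le ⟨0, fun L hL => hL.1⟩ ⟨by norm_num, fun x y => ?_⟩
        rw [show (2:ℝ) / 2 = 1 by norm_num, one_mul]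
        exact happrox x y
      · refine le_csInf ⟨2, by norm_num, fun x y => by
          rw [show (2:ℝ) / 2 = 1 by norm_num, one_mul]; exact happrox x y⟩ fun L hL => ?_
        have := hL.2 ![0, 0] ![1, 0]
        have hsub2 : (![1, 0] : Fin 2 → ℝ) - ![0, 0] = ![1, 0] := by
          ext i; fin_cases i <;> simp
        have hn2 : ‖(![1, 0] : Fin 2 → ℝ) - ![0, 0]‖ = 1 := by
          rw [hsub2]; exact pi_norm_eq_one _ (by norm_num) (by norm_num)
        rw [hn2] at this
        rw [fderiv_f] at this
        simp only [ContinuousLinearMap.sub_apply, ContinuousLinearMap.smul_apply, P,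
          ContinuousLinearMap.proj_apply, smul_eq_mul, Pi.sub_apply] at this
        norm_num at this
        linarith
    rw [hMset, hLset]
    norm_num
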